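/- Let L be a finite meet-semilattice and G a building set of L. Suppose x₁,…,x_t and y₁,…,y_k are elements of L such that x_t > y_j for j = 1,…,k, the joins x₁∨…∨x_t and y₁∨…∨y_k exist, F(x₁∨…∨x_t) = {x₁,…,x_t}, and F(y₁∨…∨y_k) = {y₁,…,y_k}. Then the join x₁∨…∨x_{t-1}∨y₁∨…∨y_k exists and F(x₁∨…∨x_{t-1}∨y₁∨…∨y_k) = {x₁,…,x_{t-1}, y₁,…,y_k}. -/

import Mathlib

attribute [local instance] Classical.propDecidable

universe u

/-- The set of maximal elements of `G` below `x`. -/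
def maxBelow {L : Type u} [PartialOrder L] (G : Set L) (x : L) : Set L :=
  {g | g ∈ G ∧ g ≤ x ∧ ∀ h ∈ G, h ≤ x → g ≤ h → h = g}

/-- The tuple in the product of lower intervals which is `g` in the coordinate
indexed by `g` and bottom elsewhere. -/
noncomputable def deltaTuple {L : Type u} [PartialOrder L] [OrderBot L] (G : Set L) (x : L)
    (g : maxBelow G x) : (h : maxBelow G x) → Set.Iic (h : L) :=
  fun h => if (h : L) = (g : L) then ⟨(h : L), le_refl _⟩ else ⟨⊥, bot_le⟩

/-- `G` is a (combinatorial) building set: `G` avoids the bottom element, and for every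
`x ≠ ⊥` the interval `[⊥, x]` decomposes as the product of the intervals below the maximal
elements of `G` below `x`, via an isomorphism sending delta tuples to the corresponding
maximal elements. -/
def IsBuilding {L : Type u} [PartialOrder L] [OrderBot L] (G : Set L) : Prop :=
  (∀ g ∈ G, g ≠ ⊥) ∧
  ∀ x : L, x ≠ ⊥ →
    ∃ φ : ((h : maxBelow G x) → Set.Iic (h : L)) ≃o Set.Iic x,
      ∀ g : maxBelow G x, ((φ (deltaTuple G x g) : Set.Iic x) : L) = (g : L)

section Aux

variable {L : Type u} [PartialOrder L] [OrderBot L] (G : Set L) (jx xt : L)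

/-- tuple with `z` in the `xt` coordinate and `⊥` elsewhere -/
noncomputable def oneCoordTuple (z : Set.Iic xt) : (h : maxBelow G jx) → Set.Iic (h : L) :=
  fun h => if hh : (h : L) = xt then ⟨(z : L), le_trans z.2 (le_of_eq hh.symm)⟩ else ⟨⊥, bot_le⟩

/-- tuple with `z` in the `xt` coordinate and `h` in each other coordinate `h` -/
noncomputable def replaceTuple (z : Set.Iic xt) : (h : maxBelow G jx) → Set.Iic (h : L) :=
  fun h => if hh : (h : L) = xt then ⟨(z : L), le_trans z.2 (le_of_eq hh.symm)⟩
    else ⟨(h : L), le_refl _⟩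

lemma oneCoord_mono {z z' : Set.Iic xt} (h : z ≤ z') :
    oneCoordTuple G jx xt z ≤ oneCoordTuple G jx xt z' := by
  intro a
  unfold oneCoordTuple
  by_cases hh : (a : L) = xt
  · rw [dif_pos hh, dif_pos hh]; exact h
  · rw [dif_neg hh, dif_neg hh]

lemma oneCoord_le_replace {z z' : Set.Iic xt} (h : z ≤ z') :
    oneCoordTuple G jx xt z ≤ replaceTuple G jx xt z' := by
  intro a
  unfold oneCoordTuple replaceTuple
  by_cases hh : (a : L) = xt
  · rw [dif_pos hh, dif_pos hh]; exact h
  · rw [dif_neg hh, dif_neg hh]; exact bot_le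

lemma oneCoord_le_delta (hxtm : xt ∈ maxBelow G jx) (z : Set.Iic xt) :
    oneCoordTuple G jx xt z ≤ deltaTuple G jx ⟨xt, hxtm⟩ := by
  intro a
  unfold oneCoordTuple deltaTuple
  by_cases hh : (a : L) = xt
  · rw [dif_pos hh, if_pos hh]
    show (z : L) ≤ (a : L)
    exact le_trans z.2 (le_of_eq hh.symm)
  · rw [dif_neg hh, if_neg hh]

lemma delta_le_replace (x : maxBelow G jx) (hne : (x : L) ≠ xt) (z : Set.Iic xt) :
    deltaTuple G jx x ≤ replaceTuple G jx xt z := by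
  intro a
  unfold deltaTuple replaceTuple
  by_cases hh : (a : L) = (x : L)
  · have ha : ¬ (a : L) = xt := by rw [hh]; exact hne
    rw [if_pos hh, dif_neg ha]
  · rw [if_neg hh]
    by_cases ha : (a : L) = xt
    · rw [dif_pos ha]; exact bot_le
    · rw [dif_neg ha]; exact bot_le

lemma eq_oneCoord_of_le_delta (hxtm : xt ∈ maxBelow G jx)
    (D : (h : maxBelow G jx) → Set.Iic (h : L))
    (hD : D ≤ deltaTuple G jx ⟨xt, hxtm⟩) :
    D = oneCoordTuple G jx xt ⟨(D ⟨xt, hxtm⟩ : L), (D ⟨xt, hxtm⟩).2⟩ := by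
  funext a
  unfold oneCoordTuple
  by_cases hh : (a : L) = xt
  · have ha : a = (⟨xt, hxtm⟩ : maxBelow G jx) := Subtype.ext hh
    subst ha
    rw [dif_pos rfl]
  · rw [dif_neg hh]
    have h1 := hD a
    unfold deltaTuple at h1
    rw [if_neg hh] at h1
    exact Subtype.ext (le_bot_iff.mp h1)

lemma exists_maxBelow_above {L : Type u} [PartialOrder L] [Finite L] (G : Set L) (w g : L)
    (hg : g ∈ G) (hgw : g ≤ w) : ∃ a ∈ maxBelow G w, g ≤ a := by
  obtain ⟨a, ⟨haG, hga, haw⟩, hmax⟩ :=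
    Set.Finite.exists_maximalFor id {h | h ∈ G ∧ g ≤ h ∧ h ≤ w} (Set.toFinite _)
      ⟨g, hg, le_refl g, hgw⟩
  exact ⟨a, ⟨haG, haw, fun h hhG hhw hah => le_antisymm (hmax ⟨hhG, le_trans hga hah, hhw⟩ hah) hah⟩, hga⟩

lemma factor_unique {L : Type u} [PartialOrder L] [OrderBot L] (G : Set L) (jx : L)
    (hGne : ∀ g ∈ G, g ≠ ⊥)
    (φ : ((h : maxBelow G jx) → Set.Iic (h : L)) ≃o Set.Iic jx)
    (hφ : ∀ g : maxBelow G jx, ((φ (deltaTuple G jx g) : Set.Iic jx) : L) = (g : L))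
    (g : L) (hg : g ∈ G) (hgjx : g ≤ jx)
    (a b : maxBelow G jx) (hga : g ≤ (a : L)) (hgb : g ≤ (b : L)) : a = b := by
  by_contra hab
  set D := φ.symm ⟨g, hgjx⟩ with hDdef
  have hφD : φ D = ⟨g, hgjx⟩ := φ.apply_symm_apply _
  have hle : ∀ c : maxBelow G jx, g ≤ (c : L) → D ≤ deltaTuple G jx c := by
    intro c hc
    apply φ.le_iff_le.mp
    rw [hφD, ← Subtype.coe_le_coe, hφ c]
    exact hc
  have hDa := hle a hga
  have hDb := hle b hgb
  have hbot : ∀ h, D h = ⟨⊥, bot_le⟩ := by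
    intro h
    have h1 := hDa h
    have h2 := hDb h
    unfold deltaTuple at h1 h2
    by_cases e1 : (h : L) = (a : L)
    · have e2 : ¬ (h : L) = (b : L) := by
        intro e2; exact hab (Subtype.ext (e1.symm.trans e2))
      rw [if_neg e2] at h2
      exact Subtype.ext (le_bot_iff.mp h2)
    · rw [if_neg e1] at h1
      exact Subtype.ext (le_bot_iff.mp h1)
  have hDbot : D = φ.symm ⟨⊥, bot_le⟩ := by
    apply le_antisymm
    · intro h
      rw [hbot h]
      show (⊥ : L) ≤ _
      exact bot_le
    · exact φ.symm.monotone (by exact bot_le)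
  have : (⟨g, hgjx⟩ : Set.Iic jx) = ⟨⊥, bot_le⟩ := by
    rw [← hφD, hDbot, φ.apply_symm_apply]
  exact hGne g hg (congrArg Subtype.val this)

end Aux

/-- the "Fact" in the proof of Proposition 2.8: replacing one element `xt`
of a factor set by the factor set of a join of elements strictly below `xt` again yields
a factor set. -/
theorem factors_replace_element_by_factors_below {L : Type u} [SemilatticeInf L] [Fintype L]
    [OrderBot L] (G : Set L) (hG : IsBuilding G)
    (X Y : Finset L) (xt : L) (hxt : xt ∈ X)
    (hlt : ∀ y ∈ Y, y < xt)
    (jx : L) (hjx : IsLUB (↑X : Set L) jx) (hFx : maxBelow G jx = ↑X)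
    (jy : L) (hjy : IsLUB (↑Y : Set L) jy) (hFy : maxBelow G jy = ↑Y) :
    ∃ j : L, IsLUB ((↑(X.erase xt) : Set L) ∪ ↑Y) j ∧
      maxBelow G j = (↑(X.erase xt) : Set L) ∪ ↑Y := by
  classical
  have hXsub : ∀ x ∈ X, x ∈ maxBelow G jx := by
    intro x hx; rw [hFx]; exact Finset.mem_coe.mpr hx
  have hxtm : xt ∈ maxBelow G jx := hXsub xt hxt
  have hjxne : jx ≠ ⊥ := fun h => hG.1 xt hxtm.1 (le_antisymm (h ▸ hxtm.2.1) bot_le)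
  obtain ⟨φ, hφ⟩ := hG.2 jx hjxne
  set xtm : maxBelow G jx := (⟨xt, hxtm⟩ : maxBelow G jx) with hxtmdef
  have hjyxt : jy ≤ xt := hjy.2 fun y hy => (hlt y (Finset.mem_coe.mp hy)).le
  -- the order-embedding from Iic xt into itself
  have hExt : ∀ z : Set.Iic xt, (φ (oneCoordTuple G jx xt z) : L) ≤ xt := by
    intro z
    have h1 := φ.monotone (oneCoord_le_delta G jx xt hxtm z)
    calc (φ (oneCoordTuple G jx xt z) : L) ≤ (φ (deltaTuple G jx xtm) : L) :=
          Subtype.coe_le_coe.2 h1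
      _ = xt := hφ xtm
  set e : Set.Iic xt → Set.Iic xt := fun z => ⟨(φ (oneCoordTuple G jx xt z) : L), hExt z⟩
    with hedef
  have heinj : Function.Injective e := by
    intro z z' h
    have h1 : (e z : L) = (e z' : L) := congrArg Subtype.val h
    have h2 : φ (oneCoordTuple G jx xt z) = φ (oneCoordTuple G jx xt z') := Subtype.ext h1
    have h3 := φ.injective h2
    have h4 := congrFun h3 xtm
    unfold oneCoordTuple at h4
    rw [dif_pos rfl, dif_pos rfl] at h4
    exact Subtype.ext (congrArg Subtype.val h4)
  obtain ⟨z₀, hz₀⟩ := (Finite.injective_iff_bijective.mp heinj).2 ⟨jy, hjyxt⟩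
  have hz₀val : (φ (oneCoordTuple G jx xt z₀) : L) = jy := congrArg Subtype.val hz₀
  set T := replaceTuple G jx xt z₀ with hTdef
  set j : L := (φ T : L) with hjdef
  have hjjx : j ≤ jx := (φ T).2
  -- upper bound facts
  have hxj : ∀ x ∈ X.erase xt, x ≤ j := by
    intro x hx
    have hxm : x ∈ maxBelow G jx := hXsub x (Finset.mem_of_mem_erase hx)
    have hne : ((⟨x, hxm⟩ : maxBelow G jx) : L) ≠ xt := (Finset.mem_erase.mp hx).1
    have h1 := φ.monotone (delta_le_replace G jx xt ⟨x, hxm⟩ hne z₀)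
    calc x = (φ (deltaTuple G jx ⟨x, hxm⟩) : L) := by
          have := hφ ⟨x, hxm⟩; exact this.symm
      _ ≤ j := Subtype.coe_le_coe.2 h1
  have hjyj : jy ≤ j := by
    rw [← hz₀val]
    exact Subtype.coe_le_coe.2 (φ.monotone (oneCoord_le_replace G jx xt (le_refl z₀)))
  have hub : ∀ s ∈ ((↑(X.erase xt) : Set L) ∪ ↑Y), s ≤ j := by
    rintro s (hs | hs)
    · exact hxj s (Finset.mem_coe.mp hs)
    · exact le_trans (hjy.1 hs) hjyj
  -- least upper bound
  have hleast : ∀ u ∈ upperBounds ((↑(X.erase xt) : Set L) ∪ ↑Y), j ≤ u := by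
    intro u hu
    set u' := j ⊓ u with hu'def
    have hu'jx : u' ≤ jx := le_trans inf_le_left hjjx
    set U := φ.symm ⟨u', hu'jx⟩ with hUdef
    have hφU : φ U = ⟨u', hu'jx⟩ := φ.apply_symm_apply _
    have hjyu' : jy ≤ u' := hjy.2 fun y hy =>
      le_inf (le_trans (hjy.1 hy) hjyj) (hu (Or.inr hy))
    have hocU : oneCoordTuple G jx xt z₀ ≤ U := by
      apply φ.le_iff_le.mp
      rw [hφU, ← Subtype.coe_le_coe, hz₀val]
      exact hjyu'
    have hTU : T ≤ U := by
      intro h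
      by_cases hh : (h : L) = xt
      · have hhe : h = xtm := Subtype.ext hh
        subst hhe
        have h1 := hocU xtm
        calc T xtm = (oneCoordTuple G jx xt z₀) xtm := by
              rw [hTdef]; unfold replaceTuple oneCoordTuple; rw [dif_pos rfl, dif_pos rfl]
          _ ≤ U xtm := h1
      · have hhX : (h : L) ∈ X := (Set.ext_iff.mp hFx (h : L)).mp h.2
        have hhu' : (h : L) ≤ u' :=
          le_inf (hxj _ (Finset.mem_erase.mpr ⟨hh, hhX⟩))
            (hu (Or.inl (Finset.mem_coe.mpr (Finset.mem_erase.mpr ⟨hh, hhX⟩))))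
        have hδ : deltaTuple G jx h ≤ U := by
          apply φ.le_iff_le.mp
          rw [hφU, ← Subtype.coe_le_coe, hφ h]
          exact hhu'
        have h1 := hδ h
        calc T h = deltaTuple G jx h h := by
              rw [hTdef]; unfold replaceTuple deltaTuple; rw [dif_neg hh, if_pos rfl]
          _ ≤ U h := h1
    have h2 := φ.monotone hTU
    rw [hφU] at h2
    exact le_trans (Subtype.coe_le_coe.2 h2) inf_le_right
  -- the key claim
  have hkey : ∀ g ∈ G, g ≤ j → (∃ x ∈ X.erase xt, g ≤ x) ∨ g ≤ jy := by
    intro g hg hgj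
    have hgjx : g ≤ jx := le_trans hgj hjjx
    obtain ⟨a, ham, hga⟩ := exists_maxBelow_above G jx g hg hgjx
    by_cases hax : a = xt
    · subst hax
      right
      set D := φ.symm ⟨g, hgjx⟩ with hDdef
      have hφD : φ D = ⟨g, hgjx⟩ := φ.apply_symm_apply _
      have hDdelta : D ≤ deltaTuple G jx xtm := by
        apply φ.le_iff_le.mp
        rw [hφD, ← Subtype.coe_le_coe, hφ xtm]
        exact hga
      have hDT : D ≤ T := by
        apply φ.le_iff_le.mp
        rw [hφD, ← Subtype.coe_le_coe]
        exact hgj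
      have hw := eq_oneCoord_of_le_delta G jx a hxtm D hDdelta
      set w : Set.Iic a := ⟨(D ⟨a, hxtm⟩ : L), (D ⟨a, hxtm⟩).2⟩ with hwdef
      have hwz₀ : w ≤ z₀ := by
        have h1 := hDT xtm
        have h2 : T xtm = ⟨(z₀ : L), z₀.2⟩ := by
          rw [hTdef]; unfold replaceTuple; rw [dif_pos rfl]
        rw [h2] at h1
        exact h1
      have hg1 : g = (φ (oneCoordTuple G jx a w) : L) := by
        rw [← hw, hφD]
      calc g = (φ (oneCoordTuple G jx a w) : L) := hg1
        _ ≤ (φ (oneCoordTuple G jx a z₀) : L) :=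
          Subtype.coe_le_coe.2 (φ.monotone (oneCoord_mono G jx a hwz₀))
        _ = jy := hz₀val
    · left
      have haX : a ∈ X := by rw [hFx] at ham; exact ham
      exact ⟨a, Finset.mem_erase.mpr ⟨hax, haX⟩, hga⟩
  -- conclusion
  refine ⟨j, ⟨fun s hs => hub s hs, fun u hu => hleast u hu⟩, ?_⟩
  ext g
  constructor
  · rintro ⟨hgG, hgj, hgmax⟩
    rcases hkey g hgG hgj with ⟨x, hxE, hgx⟩ | hgjy
    · have hxG : x ∈ G := (hXsub x (Finset.mem_of_mem_erase hxE)).1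
      have hxg : x = g := hgmax x hxG (hxj x hxE) hgx
      exact Or.inl (Finset.mem_coe.mpr (hxg ▸ hxE))
    · obtain ⟨a, ham, hga⟩ := exists_maxBelow_above G jy g hgG hgjy
      have haY : a ∈ (↑Y : Set L) := by rw [← hFy]; exact ham
      have hag : a = g := hgmax a ham.1 (le_trans ham.2.1 hjyj) hga
      exact Or.inr (hag ▸ haY)
  · rintro (hs | hs)
    · have hsX : g ∈ X := Finset.mem_of_mem_erase (Finset.mem_coe.mp hs)
      have hsm := hXsub g hsX
      exact ⟨hsm.1, hxj g (Finset.mem_coe.mp hs),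
        fun h hhG hhj hgh => hsm.2.2 h hhG (le_trans hhj hjjx) hgh⟩
    · have hsm : g ∈ maxBelow G jy := by rw [hFy]; exact hs
      refine ⟨hsm.1, le_trans hsm.2.1 hjyj, ?_⟩
      intro h hhG hhj hgh
      rcases hkey h hhG hhj with ⟨x', hx'E, hhx'⟩ | hhjy
      · exfalso
        have hgxt : g ≤ xt := (hlt g (Finset.mem_coe.mp hs)).le
        have hx'm := hXsub x' (Finset.mem_of_mem_erase hx'E)
        have heq : (⟨x', hx'm⟩ : maxBelow G jx) = xtm :=
          factor_unique G jx hG.1 φ hφ g hsm.1 (le_trans hgxt hxtm.2.1)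
            ⟨x', hx'm⟩ xtm (le_trans hgh hhx') hgxt
        exact (Finset.mem_erase.mp hx'E).1 (congrArg Subtype.val heq)
      · exact hsm.2.2 h hhG hhjy hgh
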